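/- Let ρ : F₂ → U(2) be a group homomorphism into the 2×2 unitary group acting on ℂ² such that no nontrivial element ρ(g) has 1 as an eigenvalue and ℂ² contains no nonzero ρ(F₂)-invariant vector. Then there exists a cocycle G : F₂ → ℂ² for ρ that is unbounded on F₂ but bounded on every cyclic subgroup of F₂. Equivalently, the affine isometric action g·x = ρ(g)x + G(g) of F₂ on ℂ² ≅ ℝ⁴ has unbounded orbits, yet every single element of F₂ fixes a point of ℂ². -/

import Mathlib

open scoped BigOperators

abbrev F2 : Type := FreeGroup Bool

section Aux

local notation "EE" => EuclideanSpace ℂ (Fin 2)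

/-- A cocycle vanishes at 1. -/
lemma cocycle_one (ρ : F2 →* (EE ≃ₗᵢ[ℂ] EE)) (G : F2 → EE)
    (hcoc : ∀ g g' : F2, G (g * g') = G g + ρ g (G g')) : G 1 = 0 := by
  have h := hcoc 1 1
  simp only [mul_one, map_one, LinearIsometryEquiv.coe_one, id_eq] at h
  have : G 1 + 0 = G 1 + G 1 := by simpa using h
  exact (add_left_cancel this).symm

/-- Every element has a fixed point for the affine action. -/
lemma cocycle_fix (ρ : F2 →* (EE ≃ₗᵢ[ℂ] EE))
    (h1 : ∀ g : F2, g ≠ 1 → ∀ v : EE, ρ g v = v → v = 0)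
    (G : F2 → EE) (hcoc : ∀ g g' : F2, G (g * g') = G g + ρ g (G g')) (g : F2) :
    ∃ x : EE, ρ g x + G g = x := by
  by_cases hg : g = 1
  · exact ⟨0, by simp [hg, cocycle_one ρ G hcoc]⟩
  · set L : EE →ₗ[ℂ] EE := LinearMap.id - (ρ g).toLinearEquiv.toLinearMap with hL
    have hinj : Function.Injective L := by
      rw [← LinearMap.ker_eq_bot, LinearMap.ker_eq_bot']
      intro v hv
      have : v - ρ g v = 0 := by simpa [hL, sub_eq_zero] using hv
      exact h1 g hg v (by rw [sub_eq_zero] at this; exact this.symm)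
    have hsurj : Function.Surjective L := (LinearMap.injective_iff_surjective).mp hinj
    obtain ⟨x, hx⟩ := hsurj (G g)
    refine ⟨x, ?_⟩
    have hxx : x - ρ g x = G g := by simpa [hL] using hx
    rw [← hxx]; abel

/-- Values on powers of `g` in terms of a fixed point of `g`. -/
lemma cocycle_zpow (ρ : F2 →* (EE ≃ₗᵢ[ℂ] EE)) (G : F2 → EE)
    (hcoc : ∀ g g' : F2, G (g * g') = G g + ρ g (G g')) (g : F2) (x : EE)
    (hx : ρ g x + G g = x) : ∀ n : ℤ, G (g ^ n) = x - ρ (g ^ n) x := by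
  have hGg : G g = x - ρ g x := by rw [eq_sub_iff_add_eq, add_comm]; exact hx
  have hstep : ∀ m : ℤ, G (g ^ m) = x - ρ (g ^ m) x → G (g ^ (m + 1)) = x - ρ (g ^ (m + 1)) x := by
    intro m hm
    have hmul : g ^ (m + 1) = g ^ m * g := by rw [zpow_add, zpow_one]
    rw [hmul, hcoc, hm, hGg, map_mul]
    simp only [map_sub, LinearIsometryEquiv.coe_mul, Function.comp_apply]
    abel
  have hstep' : ∀ m : ℤ, G (g ^ (m + 1)) = x - ρ (g ^ (m + 1)) x → G (g ^ m) = x - ρ (g ^ m) x := by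
    intro m hm
    have hmul : g ^ (m + 1) = g ^ m * g := by rw [zpow_add, zpow_one]
    have h' : G (g ^ m) + ρ (g ^ m) (G g) = x - ρ (g ^ (m + 1)) x := by
      rw [← hcoc, ← hmul]; exact hm
    have h2 : G (g ^ m) = x - ρ (g ^ (m + 1)) x - ρ (g ^ m) (x - ρ g x) := by
      rw [← hGg]; exact eq_sub_of_add_eq h'
    rw [h2, hmul, map_mul]
    simp only [map_sub, LinearIsometryEquiv.coe_mul, Function.comp_apply]
    abel
  intro n
  induction n using Int.induction_on with
  | zero => simp [cocycle_one ρ G hcoc]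
  | succ k ih => exact hstep k ih
  | pred k ih =>
    exact hstep' (-(k : ℤ) - 1) (by rw [show (-(k : ℤ) - 1 + 1) = -k by ring]; exact ih)

/-- Bruhat–Tits / circumcenter: a bounded cocycle admits a global fixed point. -/
lemma bounded_cocycle_fix (ρ : F2 →* (EE ≃ₗᵢ[ℂ] EE)) (G : F2 → EE)
    (hcoc : ∀ g g' : F2, G (g * g') = G g + ρ g (G g')) (C : ℝ)
    (hC : ∀ g : F2, ‖G g‖ ≤ C) : ∃ x : EE, ∀ g : F2, ρ g x + G g = x := by
  have hG1 : G 1 = 0 := cocycle_one ρ G hcoc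
  set f : EE → ℝ := fun x => ⨆ g : F2, ‖x - G g‖ with hf
  have hbdd : ∀ x : EE, BddAbove (Set.range fun g : F2 => ‖x - G g‖) := by
    intro x
    refine ⟨‖x‖ + C, ?_⟩
    rintro _ ⟨g, rfl⟩
    calc ‖x - G g‖ ≤ ‖x‖ + ‖G g‖ := norm_sub_le _ _
    _ ≤ ‖x‖ + C := by linarith [hC g]
  have hle : ∀ (x : EE) (g : F2), ‖x - G g‖ ≤ f x := fun x g => le_ciSup (hbdd x) g
  have hsup : ∀ (x : EE) (M : ℝ), (∀ g, ‖x - G g‖ ≤ M) → f x ≤ M := fun x M h => ciSup_le h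
  have hfnorm : ∀ x : EE, ‖x‖ ≤ f x := fun x => by simpa [hG1] using hle x 1
  have hf0 : ∀ x : EE, 0 ≤ f x := fun x => (norm_nonneg x).trans (hfnorm x)
  have hlip : LipschitzWith 1 f := by
    apply LipschitzWith.of_dist_le_mul
    intro x y
    rw [NNReal.coe_one, one_mul, Real.dist_eq, abs_sub_le_iff]
    constructor
    · have : f x ≤ dist x y + f y := by
        apply hsup
        intro g
        calc ‖x - G g‖ ≤ ‖x - y‖ + ‖y - G g‖ := by
              have hxy : x - G g = (x - y) + (y - G g) := by abel
              rw [hxy]; exact norm_add_le _ _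
        _ ≤ dist x y + f y := by rw [dist_eq_norm]; linarith [hle y g]
      linarith
    · have : f y ≤ dist x y + f x := by
        apply hsup
        intro g
        calc ‖y - G g‖ ≤ ‖y - x‖ + ‖x - G g‖ := by
              have hxy : y - G g = (y - x) + (x - G g) := by abel
              rw [hxy]; exact norm_add_le _ _
        _ ≤ dist x y + f x := by rw [dist_eq_norm, ← norm_sub_rev]; linarith [hle x g]
      linarith
  have hcont : Continuous f := hlip.continuous
  have hinv : ∀ (g : F2) (x : EE), f (ρ g x + G g) = f x := by
    intro g x
    have hkey : ∀ h : F2, ‖(ρ g x + G g) - G (g * h)‖ = ‖x - G h‖ := by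
      intro h
      rw [hcoc]
      have he : (ρ g x + G g) - (G g + ρ g (G h)) = ρ g (x - G h) := by
        rw [map_sub]; abel
      rw [he, LinearIsometryEquiv.norm_map]
    apply le_antisymm
    · apply hsup
      intro h
      have hk := hkey (g⁻¹ * h)
      rw [mul_inv_cancel_left] at hk
      rw [hk]; exact hle x _
    · apply hsup
      intro h
      rw [← hkey h]; exact hle _ _
  obtain ⟨x₀, hx₀mem, hx₀min⟩ := (isCompact_closedBall (0 : EE) (f 0)).exists_isMinOn
    ⟨0, by simp [Metric.mem_closedBall, hf0 0]⟩ hcont.continuousOn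
  have hglobal : ∀ y : EE, f x₀ ≤ f y := by
    intro y
    by_cases hy : y ∈ Metric.closedBall (0 : EE) (f 0)
    · exact hx₀min hy
    · have hy' : f 0 < ‖y‖ := by
        rw [Metric.mem_closedBall, dist_zero_right, not_le] at hy; exact hy
      have h0mem : (0 : EE) ∈ Metric.closedBall (0 : EE) (f 0) := by
        simp [Metric.mem_closedBall, hf0 0]
      calc f x₀ ≤ f 0 := hx₀min h0mem
      _ ≤ ‖y‖ := hy'.le
      _ ≤ f y := hfnorm y
  refine ⟨x₀, fun g => ?_⟩
  set y : EE := ρ g x₀ + G g with hy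
  have hfy : f y = f x₀ := hinv g x₀
  set m : EE := (2 : ℂ)⁻¹ • (x₀ + y) with hm
  have hnormhalf : ‖((2 : ℂ)⁻¹)‖ = 2⁻¹ := by
    rw [norm_inv]; norm_num
  have key : ∀ h : F2, ‖m - G h‖ ^ 2 ≤ f x₀ ^ 2 - ‖x₀ - y‖ ^ 2 / 4 := by
    intro h
    set u : EE := x₀ - G h with hu
    set v : EE := y - G h with hv
    have hpar := parallelogram_law_with_norm ℂ u v
    have huv : u - v = x₀ - y := by rw [hu, hv]; abel
    have hmgh : m - G h = (2 : ℂ)⁻¹ • (u + v) := by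
      rw [hm, hu, hv]; module
    have hnm : ‖m - G h‖ = 2⁻¹ * ‖u + v‖ := by
      rw [hmgh, norm_smul, hnormhalf]
    have hub : ‖u‖ ≤ f x₀ := hle x₀ h
    have hvb : ‖v‖ ≤ f x₀ := by rw [← hfy]; exact hle y h
    rw [huv] at hpar
    rw [hnm]
    nlinarith [hpar, mul_self_le_mul_self (norm_nonneg u) hub,
      mul_self_le_mul_self (norm_nonneg v) hvb, norm_nonneg (u + v), norm_nonneg (x₀ - y)]
  have hd2 : ‖x₀ - y‖ ^ 2 ≤ 0 := by
    set K : ℝ := f x₀ ^ 2 - ‖x₀ - y‖ ^ 2 / 4 with hK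
    have hK0 : 0 ≤ K := le_trans (sq_nonneg ‖m - G 1‖) (key 1)
    have hfmK : f m ≤ Real.sqrt K := by
      apply hsup
      intro h
      exact (Real.le_sqrt (norm_nonneg _) hK0).mpr (key h)
    have h2 : f x₀ ≤ Real.sqrt K := le_trans (hglobal m) hfmK
    have h3 : f x₀ ^ 2 ≤ K := by
      nlinarith [mul_self_le_mul_self (hf0 x₀) h2, Real.sq_sqrt hK0]
    rw [hK] at h3; linarith
  have hsq : ‖x₀ - y‖ ^ 2 = 0 := le_antisymm hd2 (sq_nonneg _)
  have hn0 : ‖x₀ - y‖ = 0 := sq_eq_zero_iff.mp hsq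
  have hxy : x₀ = y := by rwa [norm_eq_zero, sub_eq_zero] at hn0
  rw [hy] at hxy; exact hxy.symm

end Aux

/-- if ρ : F₂ → U(2) acting on ℂ² is such that no nontrivial ρ(g) has 1
as an eigenvalue and there is no nonzero ρ(F₂)-invariant vector, then there is a
cocycle G : F₂ → ℂ² that is unbounded on F₂ but bounded on every cyclic subgroup;
equivalently, the affine isometric action x ↦ ρ(g)x + G(g) has unbounded orbits yet
every single element of F₂ fixes a point of ℂ². -/
theorem stmt17
    (ρ : F2 →* (EuclideanSpace ℂ (Fin 2) ≃ₗᵢ[ℂ] EuclideanSpace ℂ (Fin 2)))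
    (h1 : ∀ g : F2, g ≠ 1 → ∀ v : EuclideanSpace ℂ (Fin 2), ρ g v = v → v = 0)
    (h2 : ∀ v : EuclideanSpace ℂ (Fin 2), (∀ g : F2, ρ g v = v) → v = 0) :
    ∃ G : F2 → EuclideanSpace ℂ (Fin 2),
      (∀ g g' : F2, G (g * g') = G g + ρ g (G g')) ∧
      (¬ ∃ C : ℝ, ∀ g : F2, ‖G g‖ ≤ C) ∧
      (∀ g : F2, ∃ C : ℝ, ∀ n : ℤ, ‖G (g ^ n)‖ ≤ C) ∧
      (∀ g : F2, ∃ x : EuclideanSpace ℂ (Fin 2), ρ g x + G g = x) := by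
  classical
  -- the nonzero translation on generator `true`
  set α : EuclideanSpace ℂ (Fin 2) := EuclideanSpace.single 0 1 with hα
  have hα0 : α ≠ 0 := by
    intro h
    have hn : ‖α‖ = 0 := by rw [h, norm_zero]
    rw [hα, EuclideanSpace.norm_single] at hn
    norm_num at hn
  -- affine permutations x ↦ c + ρ(of s) x
  set σ : Bool → Equiv.Perm (EuclideanSpace ℂ (Fin 2)) := fun s =>
    (ρ (FreeGroup.of s)).toEquiv.trans (Equiv.addLeft (if s then α else 0)) with hσ
  set φ : F2 →* Equiv.Perm (EuclideanSpace ℂ (Fin 2)) := FreeGroup.lift σ with hφ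
  set G : F2 → EuclideanSpace ℂ (Fin 2) := fun g => φ g 0 with hG
  have hGdef : ∀ g : F2, G g = φ g 0 := fun _ => rfl
  have hσ_apply : ∀ (s : Bool) (x : EuclideanSpace ℂ (Fin 2)),
      σ s x = (if s then α else 0) + ρ (FreeGroup.of s) x := fun s x => rfl
  have hl : ∀ s : Bool, φ (FreeGroup.of s) = σ s := fun s => by
    rw [hφ]; exact FreeGroup.lift_apply_of
  have hρinv : ∀ (g : F2) (z : EuclideanSpace ℂ (Fin 2)), ρ g (ρ g⁻¹ z) = z := by
    intro g z
    have he : ρ g (ρ g⁻¹ z) = (ρ g * ρ g⁻¹) z := rfl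
    rw [he, ← map_mul, mul_inv_cancel, map_one]
    rfl
  -- key affine structure of φ
  have key : ∀ g : F2, ∀ x : EuclideanSpace ℂ (Fin 2), φ g x = ρ g x + G g := by
    intro g
    induction g using FreeGroup.induction_on with
    | C1 => intro x; simp [hGdef 1, map_one]
    | of s =>
      intro x
      have hps : (pure s : F2) = FreeGroup.of s := rfl
      rw [hGdef, hl, hσ_apply, hσ_apply, map_zero, add_zero]
      abel
    | inv_of s ih =>
      intro x
      have hps : (pure s : F2) = FreeGroup.of s := rfl
      set g := FreeGroup.of s with hgdef
      have hinvth : ∀ z : EuclideanSpace ℂ (Fin 2),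
          φ g⁻¹ z = ρ g⁻¹ z - ρ g⁻¹ (G g) := by
        intro z
        have hy : φ g (ρ g⁻¹ z - ρ g⁻¹ (G g)) = z := by
          rw [ih]
          rw [map_sub, hρinv, hρinv]
          abel
        have hcg := congrArg (φ g⁻¹) hy
        rw [← Equiv.Perm.mul_apply, ← map_mul, inv_mul_cancel, map_one,
          Equiv.Perm.one_apply] at hcg
        exact hcg.symm
      have hG' : G g⁻¹ = - ρ g⁻¹ (G g) := by
        rw [hGdef, hinvth 0, map_zero]; abel
      rw [hinvth x, hG']
      abel
    | mul g g' ihg ihg' =>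
      intro x
      have hfa : ∀ z : EuclideanSpace ℂ (Fin 2),
          φ (g * g') z = ρ (g * g') z + (ρ g (G g') + G g) := by
        intro z
        have h1' : φ (g * g') z = φ g (φ g' z) := by rw [map_mul]; rfl
        have h2' : ρ (g * g') z = ρ g (ρ g' z) := by rw [map_mul]; rfl
        rw [h1', ihg', ihg, map_add, h2']
        abel
      have hG0 : G (g * g') = ρ g (G g') + G g := by
        rw [hGdef, hfa 0, map_zero, zero_add]
      rw [hfa x, hG0]
  -- cocycle identity
  have hcoc : ∀ g g' : F2, G (g * g') = G g + ρ g (G g') := by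
    intro g g'
    have h1' : G (g * g') = φ g (φ g' 0) := by
      rw [hGdef, map_mul, Equiv.Perm.mul_apply]
    rw [h1', ← hGdef, key g]
    abel
  -- values at generators
  have hGa : G (FreeGroup.of true) = α := by
    rw [hGdef, hl, hσ_apply, map_zero, add_zero]
    rfl
  have hGb : G (FreeGroup.of false) = 0 := by
    rw [hGdef, hl, hσ_apply, map_zero, add_zero]
    rfl
  refine ⟨G, hcoc, ?_, ?_, ?_⟩
  · -- unbounded
    rintro ⟨C, hC⟩
    obtain ⟨x, hx⟩ := bounded_cocycle_fix ρ G hcoc C hC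
    have hx0 : x = 0 := by
      apply h1 (FreeGroup.of false) (FreeGroup.of_ne_one false) x
      have hxb := hx (FreeGroup.of false)
      rw [hGb, add_zero] at hxb
      exact hxb
    have hxa := hx (FreeGroup.of true)
    rw [hx0, map_zero, zero_add, hGa] at hxa
    exact hα0 hxa
  · -- bounded on cyclic subgroups
    intro g
    obtain ⟨x, hx⟩ := cocycle_fix ρ h1 G hcoc g
    refine ⟨2 * ‖x‖, fun n => ?_⟩
    rw [cocycle_zpow ρ G hcoc g x hx n]
    calc ‖x - ρ (g ^ n) x‖ ≤ ‖x‖ + ‖ρ (g ^ n) x‖ := norm_sub_le _ _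
    _ = 2 * ‖x‖ := by rw [LinearIsometryEquiv.norm_map]; ring
  · -- fixed points
    exact cocycle_fix ρ h1 G hcoc
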